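/- Let K: [0,∞) → [0,∞) be a continuous nondecreasing function with K_0 = 0, β ≥ 0 Borel with ∫₀ᵗ β_s dK_s < ∞ for all t and ∫₀^∞ β_s dK_s = ∞, and ℓ Borel with ∫₀^∞ ℓ_s² dK_s < ∞; set Γ_t = exp(∫₀ᵗ β_s dK_s) and ⟨L⟩_t = 1 + ∫₀ᵗ Γ_s² ℓ_s² dK_s, and assume ⟨L⟩_t → ∞ as t → ∞. Let α: [0,∞) → [0,∞) be Borel with α_t → α ∈ (0,∞) as t → ∞. Define ε_t^{(α)} = 1 + ∫₀ᵗ α_s β_s ⟨L⟩_s^{−1} Γ_s² dK_s, B_t^{(α)} = ∫₀ᵗ α_s β_s ⟨L⟩_s^{−1} Γ_s dK_s, and B̃_t^{(α)} = ∫₀ᵗ (B_t^{(α)} − B_s^{(α)})² d⟨L⟩_s, and let ε_t^{(1)} be ε_t^{(α)} with α ≡ 1. Then ε_t^{(1)} B̃_t^{(α)} / (ε_t^{(α)})² → 2 as t → ∞. -/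

import Mathlib

open MeasureTheory Set Filter Topology

open scoped Nat

section PolyakAux

variable (μ : Measure ℝ)

lemma polyak_mono_intIoc (f : ℝ → ℝ) (h0 : ∀ s, 0 ≤ f s)
    (hint : ∀ t : ℝ, IntegrableOn f (Ioc 0 t) μ) :
    Monotone fun t => ∫ s in Ioc 0 t, f s ∂μ := by
  intro u v huv
  exact setIntegral_mono_set (hint v) (ae_of_all _ h0)
    (HasSubset.Subset.eventuallyLE (Ioc_subset_Ioc_right huv))

lemma polyak_nonneg_intIoc (f : ℝ → ℝ) (h0 : ∀ s, 0 ≤ f s) (t : ℝ) :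
    0 ≤ ∫ s in Ioc 0 t, f s ∂μ :=
  setIntegral_nonneg measurableSet_Ioc fun s _ => h0 s

lemma polyak_split (f : ℝ → ℝ) {T t : ℝ} (h0T : 0 ≤ T) (hTt : T ≤ t)
    (hint : IntegrableOn f (Ioc 0 t) μ) :
    ∫ s in Ioc 0 t, f s ∂μ = (∫ s in Ioc 0 T, f s ∂μ) + ∫ s in Ioc T t, f s ∂μ := by
  rw [← Ioc_union_Ioc_eq_Ioc h0T hTt] at hint ⊢
  exact setIntegral_union (Ioc_disjoint_Ioc_of_le le_rfl) measurableSet_Ioc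
    (hint.mono_set subset_union_left) (hint.mono_set subset_union_right)

lemma polyak_toeplitz (w g : ℝ → ℝ) (hg0 : ∀ s, 0 ≤ g s)
    (hgint : ∀ t : ℝ, IntegrableOn g (Ioc 0 t) μ)
    (hwgint : ∀ t : ℝ, IntegrableOn (fun s => w s * g s) (Ioc 0 t) μ)
    (hG : Tendsto (fun t => ∫ s in Ioc 0 t, g s ∂μ) atTop atTop)
    {c : ℝ} (hw : Tendsto w atTop (𝓝 c)) :
    Tendsto (fun t => (∫ s in Ioc 0 t, w s * g s ∂μ) / ∫ s in Ioc 0 t, g s ∂μ)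
      atTop (𝓝 c) := by
  have hdiffint : ∀ t : ℝ, IntegrableOn (fun s => (w s - c) * g s) (Ioc 0 t) μ := by
    intro t
    have he : (fun s => (w s - c) * g s) = fun s => w s * g s - c * g s := by
      funext s; ring
    rw [he]
    exact (hwgint t).sub ((hgint t).const_mul c)
  rw [Metric.tendsto_atTop]
  intro ε hε
  obtain ⟨T₀, hT₀⟩ := Metric.tendsto_atTop.1 hw (ε / 2) (by positivity)
  set T := max T₀ 0 with hTdef
  set C := |∫ s in Ioc 0 T, (w s - c) * g s ∂μ| with hCdef
  have hC0 : 0 ≤ C := abs_nonneg _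
  obtain ⟨N₀, hN₀⟩ := eventually_atTop.1 (tendsto_atTop.1 hG ((2 * C + 2) / ε))
  refine ⟨max N₀ T, fun t ht => ?_⟩
  set G := ∫ s in Ioc 0 t, g s ∂μ with hGdef
  set W := ∫ s in Ioc 0 t, w s * g s ∂μ with hWdef
  have hTt : T ≤ t := le_trans (le_max_right _ _) ht
  have hNt : (2 * C + 2) / ε ≤ G := hN₀ t (le_trans (le_max_left _ _) ht)
  have hGpos : 0 < G := lt_of_lt_of_le (by positivity) hNt
  have hsplit : ∫ s in Ioc 0 t, (w s - c) * g s ∂μ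
      = (∫ s in Ioc 0 T, (w s - c) * g s ∂μ) + ∫ s in Ioc T t, (w s - c) * g s ∂μ :=
    polyak_split μ _ (le_max_right _ _) hTt (hdiffint t)
  have hsub : IntegrableOn (fun s => (w s - c) * g s) (Ioc T t) μ :=
    (hdiffint t).mono_set (Ioc_subset_Ioc_left (le_max_right T₀ 0))
  have hgsub : IntegrableOn g (Ioc T t) μ :=
    (hgint t).mono_set (Ioc_subset_Ioc_left (le_max_right T₀ 0))
  have htail : |∫ s in Ioc T t, (w s - c) * g s ∂μ| ≤ ε / 2 * G := by
    have h1 : |∫ s in Ioc T t, (w s - c) * g s ∂μ| ≤ ∫ s in Ioc T t, |w s - c| * |g s| ∂μ := by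
      simpa [Real.norm_eq_abs, abs_mul] using
        norm_integral_le_integral_norm (μ := μ.restrict (Ioc T t)) (fun s => (w s - c) * g s)
    have h2 : ∫ s in Ioc T t, |w s - c| * |g s| ∂μ ≤ ∫ s in Ioc T t, ε / 2 * g s ∂μ := by
      have habs : IntegrableOn (fun s => |w s - c| * |g s|) (Ioc T t) μ := by
        have := hsub.abs
        simpa [abs_mul, IntegrableOn] using this
      apply setIntegral_mono_on habs (hgsub.const_mul (ε / 2)) measurableSet_Ioc
      intro s hs
      have hsT : T₀ ≤ s := le_of_lt (lt_of_le_of_lt (le_max_left _ _) hs.1)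
      have hds := hT₀ s hsT
      rw [Real.dist_eq] at hds
      rw [abs_of_nonneg (hg0 s)]
      exact mul_le_mul_of_nonneg_right (le_of_lt hds) (hg0 s)
    have h3 : ∫ s in Ioc T t, ε / 2 * g s ∂μ = ε / 2 * ∫ s in Ioc T t, g s ∂μ :=
      integral_const_mul _ _
    have h4 : ∫ s in Ioc T t, g s ∂μ ≤ G :=
      setIntegral_mono_set (hgint t) (ae_of_all _ hg0)
        (HasSubset.Subset.eventuallyLE (Ioc_subset_Ioc_left (le_max_right T₀ 0)))
    calc |∫ s in Ioc T t, (w s - c) * g s ∂μ|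
        ≤ ∫ s in Ioc T t, |w s - c| * |g s| ∂μ := h1
      _ ≤ ∫ s in Ioc T t, ε / 2 * g s ∂μ := h2
      _ = ε / 2 * ∫ s in Ioc T t, g s ∂μ := h3
      _ ≤ ε / 2 * G := by nlinarith
  have hWG : W - c * G = ∫ s in Ioc 0 t, (w s - c) * g s ∂μ := by
    have he : (fun s => (w s - c) * g s) = fun s => w s * g s - c * g s := by
      funext s; ring
    rw [he, integral_sub (hwgint t) ((hgint t).const_mul c), integral_const_mul]
  have habs : |W - c * G| ≤ C + ε / 2 * G := by
    rw [hWG, hsplit]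
    calc |(∫ s in Ioc 0 T, (w s - c) * g s ∂μ) + ∫ s in Ioc T t, (w s - c) * g s ∂μ|
        ≤ C + |∫ s in Ioc T t, (w s - c) * g s ∂μ| := by rw [hCdef]; exact abs_add_le _ _
      _ ≤ C + ε / 2 * G := by linarith
  have hCG : C / G < ε / 2 := by
    rw [div_lt_iff₀ hGpos]
    have : ε / 2 * ((2 * C + 2) / ε) ≤ ε / 2 * G := by
      apply mul_le_mul_of_nonneg_left hNt (by positivity)
    have he2 : ε / 2 * ((2 * C + 2) / ε) = C + 1 := by field_simp
    nlinarith
  rw [Real.dist_eq]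
  have heq : W / G - c = (W - c * G) / G := by field_simp
  rw [heq, abs_div, abs_of_pos hGpos]
  calc |W - c * G| / G ≤ (C + ε / 2 * G) / G := by
        gcongr
      _ = C / G + ε / 2 := by rw [add_div, mul_div_assoc, div_self (ne_of_gt hGpos), mul_one]
      _ < ε / 2 + ε / 2 := by linarith
      _ = ε := by ring


lemma polyak_ibp [NullSingletonClass μ] (f g : ℝ → ℝ) (hfm : Measurable f) (hgm : Measurable g)
    (hf0 : ∀ s, 0 ≤ f s) (hg0 : ∀ s, 0 ≤ g s) (t : ℝ) (hμt : μ (Ioc 0 t) < ⊤)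
    (hf : ∀ r : ℝ, IntegrableOn f (Ioc 0 r) μ) (hg : ∀ r : ℝ, IntegrableOn g (Ioc 0 r) μ) :
    (∫ u in Ioc 0 t, f u ∂μ) * ∫ s in Ioc 0 t, g s ∂μ
      = (∫ s in Ioc 0 t, (∫ u in Ioc 0 s, f u ∂μ) * g s ∂μ)
        + ∫ s in Ioc 0 t, (∫ u in Ioc 0 s, g u ∂μ) * f s ∂μ := by
  set F := fun s => ∫ u in Ioc 0 s, f u ∂μ with hFdef
  set G := fun s => ∫ u in Ioc 0 s, g u ∂μ with hGdef
  have hFmono : Monotone F := polyak_mono_intIoc μ f hf0 hf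
  have hGmono : Monotone G := polyak_mono_intIoc μ g hg0 hg
  have hF0 : ∀ s, 0 ≤ F s := fun s => polyak_nonneg_intIoc μ f hf0 s
  have hG0 : ∀ s, 0 ≤ G s := fun s => polyak_nonneg_intIoc μ g hg0 s
  have hFmeas : Measurable F := hFmono.measurable
  have hGmeas : Measurable G := hGmono.measurable
  set ν := μ.restrict (Ioc 0 t) with hνdef
  haveI : IsFiniteMeasure ν := ⟨by rw [hνdef, Measure.restrict_apply_univ]; exact hμt⟩
  -- integrability of F * g and G * f on Ioc 0 t
  have hFg : IntegrableOn (fun s => F s * g s) (Ioc 0 t) μ := by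
    apply Integrable.mono' ((hg t).const_mul (F t))
      ((hFmeas.mul hgm).aestronglyMeasurable)
    filter_upwards [ae_restrict_mem measurableSet_Ioc] with s hs
    simp only [Real.norm_eq_abs, Pi.mul_apply]; rw [abs_of_nonneg (mul_nonneg (hF0 s) (hg0 s))]
    exact mul_le_mul_of_nonneg_right (hFmono hs.2) (hg0 s)
  have hGf : IntegrableOn (fun s => G s * f s) (Ioc 0 t) μ := by
    apply Integrable.mono' ((hf t).const_mul (G t))
      ((hGmeas.mul hfm).aestronglyMeasurable)
    filter_upwards [ae_restrict_mem measurableSet_Ioc] with s hs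
    simp only [Real.norm_eq_abs, Pi.mul_apply]; rw [abs_of_nonneg (mul_nonneg (hG0 s) (hf0 s))]
    exact mul_le_mul_of_nonneg_right (hGmono hs.2) (hf0 s)
  -- the product function
  set k : ℝ × ℝ → ℝ := fun p => if p.1 < p.2 then g p.1 * f p.2 else 0 with hkdef
  have hkint : Integrable k (ν.prod ν) := by
    have hbase : Integrable (fun p : ℝ × ℝ => g p.1 * f p.2) (ν.prod ν) :=
      Integrable.mul_prod (L := ℝ) (hg t) (hf t)
    have hS : MeasurableSet {p : ℝ × ℝ | p.1 < p.2} :=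
      measurableSet_lt measurable_fst measurable_snd
    have : k = Set.indicator {p : ℝ × ℝ | p.1 < p.2} (fun p => g p.1 * f p.2) := by
      funext p
      rw [Set.indicator_apply]
      rfl
    rw [this]
    exact hbase.indicator hS
  have hswap : ∫ s, (∫ u, k (s, u) ∂ν) ∂ν = ∫ u, (∫ s, k (s, u) ∂ν) ∂ν := by
    exact integral_integral_swap (f := fun s u => k (s, u)) (by exact hkint)
  -- evaluate the left side of hswap
  have hleft : ∫ s, (∫ u, k (s, u) ∂ν) ∂ν = ∫ s in Ioc 0 t, (F t - F s) * g s ∂μ := by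
    rw [hνdef]
    apply setIntegral_congr_fun measurableSet_Ioc
    intro s hs
    have h1 : ∀ u : ℝ, k (s, u) = (Ioi s).indicator (fun u => g s * f u) u := by
      intro u
      rw [Set.indicator_apply]
      simp only [hkdef, mem_Ioi]
    calc ∫ u, k (s, u) ∂ν = ∫ u in Ioc 0 t, (Ioi s).indicator (fun u => g s * f u) u ∂μ := by
          rw [hνdef]; exact integral_congr_ae (ae_of_all _ h1)
      _ = ∫ u in Ioc 0 t ∩ Ioi s, g s * f u ∂μ := setIntegral_indicator measurableSet_Ioi
      _ = ∫ u in Ioc s t, g s * f u ∂μ := by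
          rw [Set.Ioc_inter_Ioi, sup_eq_right.mpr (le_of_lt hs.1)]
      _ = g s * ∫ u in Ioc s t, f u ∂μ := integral_const_mul _ _
      _ = (F t - F s) * g s := by
          have := polyak_split μ f (le_of_lt hs.1) hs.2 (hf t)
          rw [hFdef]
          simp only []
          rw [eq_comm, mul_comm]
          congr 1
          linarith [this]
  -- evaluate the right side of hswap
  have hright : ∫ u, (∫ s, k (s, u) ∂ν) ∂ν = ∫ u in Ioc 0 t, G u * f u ∂μ := by
    rw [hνdef]
    apply setIntegral_congr_fun measurableSet_Ioc
    intro u hu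
    have h1 : ∀ s : ℝ, k (s, u) = (Iio u).indicator (fun s => g s * f u) s := by
      intro s
      rw [Set.indicator_apply]
      simp only [hkdef, mem_Iio]
    calc ∫ s, k (s, u) ∂ν = ∫ s in Ioc 0 t, (Iio u).indicator (fun s => g s * f u) s ∂μ := by
          rw [hνdef]; exact integral_congr_ae (ae_of_all _ h1)
      _ = ∫ s in Ioc 0 t ∩ Iio u, g s * f u ∂μ := setIntegral_indicator measurableSet_Iio
      _ = ∫ s in Ioo 0 u, g s * f u ∂μ := by
          have hset : Ioc 0 t ∩ Iio u = Ioo 0 u := by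
            ext s
            simp only [mem_inter_iff, mem_Ioc, mem_Iio, mem_Ioo]
            constructor
            · rintro ⟨⟨h1', _⟩, h3⟩; exact ⟨h1', h3⟩
            · rintro ⟨h1', h2'⟩; exact ⟨⟨h1', le_trans (le_of_lt h2') hu.2⟩, h2'⟩
          rw [hset]
      _ = (∫ s in Ioo 0 u, g s ∂μ) * f u := by
          rw [← integral_mul_const]
      _ = G u * f u := by
          rw [hGdef]
          simp only []
          rw [integral_Ioc_eq_integral_Ioo]
  -- combine
  have hkey : ∫ s in Ioc 0 t, (F t - F s) * g s ∂μ = ∫ u in Ioc 0 t, G u * f u ∂μ := by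
    rw [← hleft, ← hright, hswap]
  have hconst : ∫ s in Ioc 0 t, F t * g s ∂μ = F t * ∫ s in Ioc 0 t, g s ∂μ :=
    integral_const_mul _ _
  have hsplit2 : ∫ s in Ioc 0 t, F t * g s ∂μ
      = (∫ s in Ioc 0 t, F s * g s ∂μ) + ∫ s in Ioc 0 t, (F t - F s) * g s ∂μ := by
    rw [← integral_add hFg]
    · apply setIntegral_congr_fun measurableSet_Ioc
      intro s _
      ring
    · have he : (fun s => (F t - F s) * g s) = fun s => F t * g s - F s * g s := by
        funext s; ring
      rw [he]
      exact ((hg t).const_mul (F t)).sub hFg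
  rw [← hconst, hsplit2, hkey]


lemma polyak_pow_intIoc [NullSingletonClass μ] (f : ℝ → ℝ) (hfm : Measurable f) (hf0 : ∀ s, 0 ≤ f s)
    (hf : ∀ r : ℝ, IntegrableOn f (Ioc 0 r) μ) (hμ : ∀ r : ℝ, μ (Ioc 0 r) < ⊤) :
    ∀ (n : ℕ) (t : ℝ), (∫ u in Ioc 0 t, f u ∂μ) ^ (n + 1)
      = ((n : ℝ) + 1) * ∫ s in Ioc 0 t, (∫ u in Ioc 0 s, f u ∂μ) ^ n * f s ∂μ := by
  have hFmono : Monotone fun s => ∫ u in Ioc 0 s, f u ∂μ := polyak_mono_intIoc μ f hf0 hf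
  have hF0 : ∀ s, 0 ≤ ∫ u in Ioc 0 s, f u ∂μ := fun s => polyak_nonneg_intIoc μ f hf0 s
  have hFmeas : Measurable fun s => ∫ u in Ioc 0 s, f u ∂μ := hFmono.measurable
  have hint : ∀ (n : ℕ) (r : ℝ),
      IntegrableOn (fun s => (∫ u in Ioc 0 s, f u ∂μ) ^ n * f s) (Ioc 0 r) μ := by
    intro n r
    apply Integrable.mono' ((hf r).const_mul ((∫ u in Ioc 0 r, f u ∂μ) ^ n))
      (((hFmeas.pow_const n).mul hfm).aestronglyMeasurable)
    filter_upwards [ae_restrict_mem measurableSet_Ioc] with s hs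
    simp only [Real.norm_eq_abs, Pi.mul_apply]; rw [abs_of_nonneg (mul_nonneg (pow_nonneg (hF0 s) n) (hf0 s))]
    exact mul_le_mul_of_nonneg_right (pow_le_pow_left₀ (hF0 s) (hFmono hs.2) n) (hf0 s)
  intro n
  induction n with
  | zero =>
    intro t
    simp only [pow_one, Nat.cast_zero, zero_add, pow_zero, one_mul]
  | succ n ih =>
    intro t
    have hg0 : ∀ s, 0 ≤ ((n : ℝ) + 1) * ((∫ u in Ioc 0 s, f u ∂μ) ^ n * f s) := by
      intro s
      exact mul_nonneg (by positivity) (mul_nonneg (pow_nonneg (hF0 s) n) (hf0 s))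
    have hgm : Measurable fun s => ((n : ℝ) + 1) * ((∫ u in Ioc 0 s, f u ∂μ) ^ n * f s) :=
      ((hFmeas.pow_const n).mul hfm).const_mul _
    have hgint : ∀ r : ℝ, IntegrableOn
        (fun s => ((n : ℝ) + 1) * ((∫ u in Ioc 0 s, f u ∂μ) ^ n * f s)) (Ioc 0 r) μ :=
      fun r => (hint n r).const_mul _
    have hibp := polyak_ibp μ f
      (fun s => ((n : ℝ) + 1) * ((∫ u in Ioc 0 s, f u ∂μ) ^ n * f s))
      hfm hgm hf0 hg0 t (hμ t) hf hgint
    beta_reduce at hibp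
    have hinner : ∀ s : ℝ, ∫ u in Ioc 0 s,
        ((n : ℝ) + 1) * ((∫ u' in Ioc 0 u, f u' ∂μ) ^ n * f u) ∂μ
          = (∫ u in Ioc 0 s, f u ∂μ) ^ (n + 1) := by
      intro s
      rw [integral_const_mul, ← ih s]
    rw [hinner t] at hibp
    have h2 : ∫ s in Ioc 0 t, (∫ u in Ioc 0 s, f u ∂μ) *
        (((n : ℝ) + 1) * ((∫ u in Ioc 0 s, f u ∂μ) ^ n * f s)) ∂μ
        = ((n : ℝ) + 1) * ∫ s in Ioc 0 t, (∫ u in Ioc 0 s, f u ∂μ) ^ (n + 1) * f s ∂μ := by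
      rw [← integral_const_mul]
      apply setIntegral_congr_fun measurableSet_Ioc
      intro s _
      ring
    have h3 : ∫ s in Ioc 0 t, (∫ u in Ioc 0 s,
        ((n : ℝ) + 1) * ((∫ u' in Ioc 0 u, f u' ∂μ) ^ n * f u) ∂μ) * f s ∂μ
        = ∫ s in Ioc 0 t, (∫ u in Ioc 0 s, f u ∂μ) ^ (n + 1) * f s ∂μ := by
      apply setIntegral_congr_fun measurableSet_Ioc
      intro s _
      exact congrArg (fun z => z * f s) (hinner s)
    rw [h2, h3] at hibp
    have hfin : (∫ u in Ioc 0 t, f u ∂μ) ^ (n + 1 + 1)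
        = ((n : ℝ) + 1) * (∫ s in Ioc 0 t, (∫ u in Ioc 0 s, f u ∂μ) ^ (n + 1) * f s ∂μ)
            + ∫ s in Ioc 0 t, (∫ u in Ioc 0 s, f u ∂μ) ^ (n + 1) * f s ∂μ := by
      rw [← hibp]
      ring
    rw [hfin]
    push_cast
    ring
    
lemma polyak_exp [NullSingletonClass μ] (f : ℝ → ℝ) (hfm : Measurable f) (hf0 : ∀ s, 0 ≤ f s)
    (hf : ∀ r : ℝ, IntegrableOn f (Ioc 0 r) μ) (hμ : ∀ r : ℝ, μ (Ioc 0 r) < ⊤) (t : ℝ) :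
    Real.exp (∫ s in Ioc 0 t, f s ∂μ)
      = 1 + ∫ s in Ioc 0 t, f s * Real.exp (∫ u in Ioc 0 s, f u ∂μ) ∂μ := by
  have hFmono : Monotone fun s => ∫ u in Ioc 0 s, f u ∂μ := polyak_mono_intIoc μ f hf0 hf
  have hF0 : ∀ s, 0 ≤ ∫ u in Ioc 0 s, f u ∂μ := fun s => polyak_nonneg_intIoc μ f hf0 s
  have hFmeas : Measurable fun s => ∫ u in Ioc 0 s, f u ∂μ := hFmono.measurable
  have hexpF : ∀ r : ℝ, Real.exp (∫ u in Ioc 0 r, f u ∂μ)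
      = ∑' n : ℕ, (∫ u in Ioc 0 r, f u ∂μ) ^ n / n ! := by
    intro r
    rw [Real.exp_eq_exp_ℝ, NormedSpace.exp_eq_tsum (𝕂 := ℝ)]
    beta_reduce
    exact tsum_congr fun n => by rw [smul_eq_mul, div_eq_inv_mul]
  -- the summands
  set F := fun s => ∫ u in Ioc 0 s, f u ∂μ with hFdef
  set ph : ℕ → ℝ → ℝ := fun n s => f s * (F s ^ n / n !) with hphdef
  have hph0 : ∀ n s, 0 ≤ ph n s := by
    intro n s
    have := hf0 s
    have := hF0 s
    positivity
  have hphint : ∀ (n : ℕ), IntegrableOn (ph n) (Ioc 0 t) μ := by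
    intro n
    have he : ph n = fun s => ((n ! : ℝ))⁻¹ * (F s ^ n * f s) := by
      funext s
      simp only [hphdef]
      ring
    rw [he]
    apply Integrable.const_mul
    apply Integrable.mono' ((hf t).const_mul ((F t) ^ n))
      (((hFmeas.pow_const n).mul hfm).aestronglyMeasurable)
    filter_upwards [ae_restrict_mem measurableSet_Ioc] with s hs
    simp only [Real.norm_eq_abs, Pi.mul_apply]; rw [abs_of_nonneg (mul_nonneg (pow_nonneg (hF0 s) n) (hf0 s))]
    exact mul_le_mul_of_nonneg_right (pow_le_pow_left₀ (hF0 s) (hFmono hs.2) n) (hf0 s)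
  have hphval : ∀ n : ℕ, ∫ s in Ioc 0 t, ph n s ∂μ = F t ^ (n + 1) / (n + 1)! := by
    intro n
    have he : ph n = fun s => ((n ! : ℝ))⁻¹ * (F s ^ n * f s) := by
      funext s
      simp only [hphdef]
      ring
    rw [he, integral_const_mul]
    have hp := polyak_pow_intIoc μ f hfm hf0 hf hμ n t
    have hn1 : (∫ s in Ioc 0 t, F s ^ n * f s ∂μ) = F t ^ (n + 1) / ((n : ℝ) + 1) := by
      rw [eq_div_iff (by positivity)]
      rw [hp]
      ring
    rw [hn1, Nat.factorial_succ]
    push_cast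
    rw [inv_mul_eq_div, div_div]
  have hsummable : Summable fun n : ℕ => F t ^ (n + 1) / (n + 1)! := by
    have := Real.summable_pow_div_factorial (F t)
    exact (_root_.summable_nat_add_iff 1).2 this
  have htsum_int : ∫ s in Ioc 0 t, (∑' n : ℕ, ph n s) ∂μ = ∑' n : ℕ, ∫ s in Ioc 0 t, ph n s ∂μ := by
    apply integral_tsum
    · intro n
      exact (hphint n).aestronglyMeasurable
    · rw [ne_eq]
      have heq : ∀ n : ℕ, (∫⁻ s in Ioc 0 t, ‖ph n s‖ₑ ∂μ) = ENNReal.ofReal (F t ^ (n + 1) / (n + 1)!) := by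
        intro n
        have h1 : (∫⁻ s in Ioc 0 t, ‖ph n s‖ₑ ∂μ) = ∫⁻ s in Ioc 0 t, ENNReal.ofReal (ph n s) ∂μ :=
          lintegral_congr fun s => Real.enorm_eq_ofReal (hph0 n s)
        rw [h1, ← ofReal_integral_eq_lintegral_ofReal (hphint n) (ae_of_all _ (hph0 n)), hphval n]
      rw [funext heq]  
      rw [← ENNReal.ofReal_tsum_of_nonneg (fun n => div_nonneg (pow_nonneg (hF0 t) _) (by positivity)) hsummable]
      exact ENNReal.ofReal_ne_top
  have hpt : ∀ s : ℝ, (∑' n : ℕ, ph n s) = f s * Real.exp (F s) := by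
    intro s
    rw [hexpF s]
    rw [← tsum_mul_left]
  have hfinal : ∫ s in Ioc 0 t, f s * Real.exp (F s) ∂μ = ∑' n : ℕ, F t ^ (n + 1) / (n + 1)! := by
    rw [← funext hpt, htsum_int]
    exact tsum_congr hphval
  have hshift : ∑' n : ℕ, F t ^ n / n ! = 1 + ∑' n : ℕ, F t ^ (n + 1) / (n + 1)! := by
    rw [Summable.tsum_eq_zero_add (Real.summable_pow_div_factorial (F t))]
    simp
  rw [hexpF t, hshift, hfinal]

end PolyakAux

/-- `Γ_t = exp(∫₀ᵗ β_s dK_s)`. -/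
noncomputable def Gam (K : StieltjesFunction ℝ) (β : ℝ → ℝ) (t : ℝ) : ℝ :=
  Real.exp (∫ s in Ioc 0 t, β s ∂K.measure)

/-- `⟨L⟩_t = 1 + ∫₀ᵗ Γ_s² ℓ_s² dK_s`. -/
noncomputable def angL (K : StieltjesFunction ℝ) (β ℓ : ℝ → ℝ) (t : ℝ) : ℝ :=
  1 + ∫ s in Ioc 0 t, (Gam K β s) ^ 2 * ℓ s ^ 2 ∂K.measure

/-- `ε_t^{(α)} = 1 + ∫₀ᵗ α_s β_s ⟨L⟩_s^{−1} Γ_s² dK_s`. -/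
noncomputable def epsAlpha (K : StieltjesFunction ℝ) (β ℓ α : ℝ → ℝ) (t : ℝ) : ℝ :=
  1 + ∫ s in Ioc 0 t, α s * β s * (angL K β ℓ s)⁻¹ * (Gam K β s) ^ 2 ∂K.measure

/-- `B_t^{(α)} = ∫₀ᵗ α_s β_s ⟨L⟩_s^{−1} Γ_s dK_s` (that is, `∫₀ᵗ Γ_s⁻¹ dε_s^{(α)}`). -/
noncomputable def BAlpha (K : StieltjesFunction ℝ) (β ℓ α : ℝ → ℝ) (t : ℝ) : ℝ :=
  ∫ s in Ioc 0 t, α s * β s * (angL K β ℓ s)⁻¹ * Gam K β s ∂K.measure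

/-- `B̃_t^{(α)} = ∫₀ᵗ (B_t^{(α)} − B_s^{(α)})² d⟨L⟩_s`; since `K` is continuous,
`d⟨L⟩_s = Γ_s² ℓ_s² dK_s`. -/
noncomputable def BtildeAlpha (K : StieltjesFunction ℝ) (β ℓ α : ℝ → ℝ) (t : ℝ) : ℝ :=
  ∫ s in Ioc 0 t,
    (BAlpha K β ℓ α t - BAlpha K β ℓ α s) ^ 2 * (Gam K β s) ^ 2 * ℓ s ^ 2 ∂K.measure

/-- Eq. (2.10) of Section 3 (the core of Proposition 3.2 on the Polyak averaging procedure):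
under the stated conditions, `ε_t^{(1)} B̃_t^{(α)} / (ε_t^{(α)})² → 2` as `t → ∞`. -/
theorem eps_one_mul_Btilde_div_epsAlpha_sq_tendsto_two (K : StieltjesFunction ℝ)
    (hKc : Continuous fun x => K x) (hK0 : K 0 = 0)
    (β ℓ : ℝ → ℝ) (hβmeas : Measurable β) (hβ0 : ∀ t, 0 ≤ β t) (hℓmeas : Measurable ℓ)
    (hβloc : ∀ t : ℝ, (∫⁻ s in Ioc 0 t, ENNReal.ofReal (β s) ∂K.measure) < ⊤)
    (hβtop : (∫⁻ s in Ioi (0 : ℝ), ENNReal.ofReal (β s) ∂K.measure) = ⊤)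
    (hℓ2 : (∫⁻ s in Ioi (0 : ℝ), ENNReal.ofReal (ℓ s ^ 2) ∂K.measure) < ⊤)
    (hLtop : Tendsto (angL K β ℓ) atTop atTop)
    (α : ℝ → ℝ) (hαmeas : Measurable α) (hα0 : ∀ t, 0 ≤ α t)
    (a : ℝ) (ha : 0 < a) (hα : Tendsto α atTop (𝓝 a))
    (hαβloc : ∀ t : ℝ, (∫⁻ s in Ioc 0 t, ENNReal.ofReal (α s * β s) ∂K.measure) < ⊤) :
    Tendsto (fun t =>
        epsAlpha K β ℓ (fun _ => 1) t * BtildeAlpha K β ℓ α t / (epsAlpha K β ℓ α t) ^ 2)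
      atTop (𝓝 2) := by
  classical
  -- no atoms
  haveI hNA : NullSingletonClass K.measure := by
    constructor
    intro x
    rw [K.measure_singleton]
    have hl : Function.leftLim (⇑K) x = K x :=
      leftLim_eq_of_tendsto
        ((hKc.tendsto x).mono_left nhdsWithin_le_nhds)
    rw [hl]
    simp
  have hμfin : ∀ r : ℝ, K.measure (Ioc 0 r) < ⊤ := fun r => by
    rw [K.measure_Ioc]; exact ENNReal.ofReal_lt_top
  -- a helper for integrand rearrangement
  have int_congr : ∀ (f g : ℝ → ℝ), (∀ s, f s = g s) →
      ∀ r : ℝ, (∫ s in Ioc 0 r, f s ∂K.measure) = ∫ s in Ioc 0 r, g s ∂K.measure :=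
    fun f g hfg r => integral_congr_ae (ae_of_all _ fun s => hfg s)
  -- basic integrability
  have intβ : ∀ r : ℝ, IntegrableOn β (Ioc 0 r) K.measure := fun r =>
    ⟨hβmeas.aestronglyMeasurable, (hasFiniteIntegral_iff_ofReal (ae_of_all _ hβ0)).2 (hβloc r)⟩
  have intαβ : ∀ r : ℝ, IntegrableOn (fun s => α s * β s) (Ioc 0 r) K.measure := fun r =>
    ⟨(hαmeas.mul hβmeas).aestronglyMeasurable,
      (hasFiniteIntegral_iff_ofReal (ae_of_all _ fun s => mul_nonneg (hα0 s) (hβ0 s))).2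
        (hαβloc r)⟩
  have intℓ2 : ∀ r : ℝ, IntegrableOn (fun s => ℓ s ^ 2) (Ioc 0 r) K.measure := fun r =>
    ⟨(hℓmeas.pow_const 2).aestronglyMeasurable,
      (hasFiniteIntegral_iff_ofReal (ae_of_all _ fun s => sq_nonneg _)).2
        (lt_of_le_of_lt (lintegral_mono_set Ioc_subset_Ioi_self) hℓ2)⟩
  -- F and Γ
  have hFmono : Monotone fun t => ∫ s in Ioc 0 t, β s ∂K.measure :=
    polyak_mono_intIoc K.measure β hβ0 intβ
  have hF0 : ∀ s : ℝ, 0 ≤ ∫ u in Ioc 0 s, β u ∂K.measure :=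
    fun s => polyak_nonneg_intIoc K.measure β hβ0 s
  have hΓ1 : ∀ s, 1 ≤ Gam K β s := fun s => Real.one_le_exp (hF0 s)
  have hΓpos : ∀ s, 0 < Gam K β s := fun s => Real.exp_pos _
  have hΓ0 : ∀ s, 0 ≤ Gam K β s := fun s => (hΓpos s).le
  have hΓne : ∀ s, Gam K β s ≠ 0 := fun s => (hΓpos s).ne'
  have hΓmono : Monotone (Gam K β) := fun u v huv => Real.exp_le_exp.2 (hFmono huv)
  have hΓmeas : Measurable (Gam K β) := Real.measurable_exp.comp hFmono.measurable
  -- F tends to infinity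
  have hFtop : Tendsto (fun t => ∫ s in Ioc 0 t, β s ∂K.measure) atTop atTop := by
    refine tendsto_atTop_atTop_of_monotone' hFmono ?_
    intro hbdd
    obtain ⟨C, hC⟩ := hbdd
    rw [mem_upperBounds] at hC
    have hCb : ∀ r : ℝ, (∫⁻ s in Ioc 0 r, ENNReal.ofReal (β s) ∂K.measure)
        ≤ ENNReal.ofReal C := by
      intro r
      rw [← ofReal_integral_eq_lintegral_ofReal (intβ r) (ae_of_all _ hβ0)]
      exact ENNReal.ofReal_le_ofReal (hC _ (Set.mem_range_self r))
    have hunion : (⋃ n : ℕ, Ioc (0:ℝ) (n:ℝ)) = Ioi 0 := by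
      ext x
      simp only [mem_iUnion, mem_Ioc, mem_Ioi]
      constructor
      · rintro ⟨n, hx, _⟩; exact hx
      · intro hx
        obtain ⟨n, hn⟩ := exists_nat_ge x
        exact ⟨n, hx, hn⟩
    set ρ := K.measure.withDensity (fun s => ENNReal.ofReal (β s)) with hρ
    have hρIoc : ∀ n : ℕ, ρ (Ioc (0:ℝ) (n:ℝ)) ≤ ENNReal.ofReal C := by
      intro n
      rw [hρ, withDensity_apply _ measurableSet_Ioc]
      exact hCb n
    have htop : ρ (Ioi (0:ℝ)) = ⊤ := by
      rw [hρ, withDensity_apply _ measurableSet_Ioi]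
      exact hβtop
    have hle : ρ (Ioi (0:ℝ)) ≤ ENNReal.ofReal C := by
      rw [← hunion, Directed.measure_iUnion]
      · exact iSup_le hρIoc
      · intro m n
        rcases le_total m n with hmn | hmn
        · exact ⟨n, Ioc_subset_Ioc_right (by exact_mod_cast hmn), subset_rfl⟩
        · exact ⟨m, subset_rfl, Ioc_subset_Ioc_right (by exact_mod_cast hmn)⟩
    rw [htop] at hle
    exact absurd (lt_of_le_of_lt hle ENNReal.ofReal_lt_top) (lt_irrefl ⊤)
  have hΓtop : Tendsto (Gam K β) atTop atTop :=
    Real.tendsto_exp_atTop.comp hFtop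
  -- q and A = angL
  set q : ℝ → ℝ := fun s => Gam K β s ^ 2 * ℓ s ^ 2 with hqdef
  have hq0 : ∀ s, 0 ≤ q s := fun s => mul_nonneg (sq_nonneg _) (sq_nonneg _)
  have hqmeas : Measurable q := (hΓmeas.pow_const 2).mul (hℓmeas.pow_const 2)
  have intq : ∀ r : ℝ, IntegrableOn q (Ioc 0 r) K.measure := by
    intro r
    apply Integrable.mono' ((intℓ2 r).const_mul (Gam K β r ^ 2))
      hqmeas.aestronglyMeasurable
    filter_upwards [ae_restrict_mem measurableSet_Ioc] with s hs
    rw [Real.norm_eq_abs, abs_of_nonneg (hq0 s)]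
    exact mul_le_mul_of_nonneg_right
      (pow_le_pow_left₀ (hΓ0 s) (hΓmono hs.2) 2) (sq_nonneg _)
  have hAeq : ∀ r : ℝ, angL K β ℓ r = 1 + ∫ s in Ioc 0 r, q s ∂K.measure := fun r => rfl
  have hAq : ∀ r : ℝ, (∫ s in Ioc 0 r, q s ∂K.measure) = angL K β ℓ r - 1 :=
    fun r => by rw [hAeq r]; ring
  have hA1 : ∀ s, 1 ≤ angL K β ℓ s := fun s => by
    rw [hAeq s]
    exact le_add_of_nonneg_right (polyak_nonneg_intIoc K.measure q hq0 s)
  have hApos : ∀ s, 0 < angL K β ℓ s := fun s => lt_of_lt_of_le one_pos (hA1 s)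
  have hAne : ∀ s, angL K β ℓ s ≠ 0 := fun s => (hApos s).ne'
  have hAinv1 : ∀ s, (angL K β ℓ s)⁻¹ ≤ 1 := fun s => inv_le_one_of_one_le₀ (hA1 s)
  have hAinv0 : ∀ s, 0 ≤ (angL K β ℓ s)⁻¹ := fun s => inv_nonneg.2 (hApos s).le
  have hAmono : Monotone (angL K β ℓ) := fun u v huv => by
    rw [hAeq u, hAeq v]
    exact add_le_add_right (polyak_mono_intIoc K.measure q hq0 intq huv) 1
  have hAmeas : Measurable (angL K β ℓ) := hAmono.measurable
  -- bound : A ≤ (1 + Lc) Γ²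
  set Lc : ℝ := (∫⁻ s in Ioi (0:ℝ), ENNReal.ofReal (ℓ s ^ 2) ∂K.measure).toReal with hLcdef
  have hLc0 : 0 ≤ Lc := ENNReal.toReal_nonneg
  have hl2le : ∀ r : ℝ, (∫ s in Ioc 0 r, ℓ s ^ 2 ∂K.measure) ≤ Lc := by
    intro r
    rw [integral_eq_lintegral_of_nonneg_ae (ae_of_all _ fun s => sq_nonneg (ℓ s))
      (hℓmeas.pow_const 2).aestronglyMeasurable]
    exact ENNReal.toReal_mono hℓ2.ne (lintegral_mono_set Ioc_subset_Ioi_self)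
  have hAbound : ∀ s, angL K β ℓ s ≤ (1 + Lc) * Gam K β s ^ 2 := by
    intro s
    have h1 : (∫ u in Ioc 0 s, q u ∂K.measure)
        ≤ Gam K β s ^ 2 * ∫ u in Ioc 0 s, ℓ u ^ 2 ∂K.measure := by
      rw [← integral_const_mul]
      apply setIntegral_mono_on (intq s) ((intℓ2 s).const_mul _) measurableSet_Ioc
      intro u hu
      exact mul_le_mul_of_nonneg_right
        (pow_le_pow_left₀ (hΓ0 u) (hΓmono hu.2) 2) (sq_nonneg _)
    have h2 : Gam K β s ^ 2 * (∫ u in Ioc 0 s, ℓ u ^ 2 ∂K.measure) ≤ Gam K β s ^ 2 * Lc :=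
      mul_le_mul_of_nonneg_left (hl2le s) (sq_nonneg _)
    have h3 : (1:ℝ) ≤ Gam K β s ^ 2 := by nlinarith [hΓ1 s]
    rw [hAeq s]
    nlinarith
  -- the density gden for ε
  set gden : ℝ → ℝ := fun s => β s * (angL K β ℓ s)⁻¹ * Gam K β s ^ 2 with hgdendef
  have hgden0 : ∀ s, 0 ≤ gden s := fun s =>
    mul_nonneg (mul_nonneg (hβ0 s) (hAinv0 s)) (sq_nonneg _)
  have hgdenmeas : Measurable gden := ((hβmeas.mul hAmeas.inv).mul (hΓmeas.pow_const 2))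
  have intgden : ∀ r : ℝ, IntegrableOn gden (Ioc 0 r) K.measure := by
    intro r
    apply Integrable.mono' ((intβ r).const_mul (Gam K β r ^ 2))
      hgdenmeas.aestronglyMeasurable
    filter_upwards [ae_restrict_mem measurableSet_Ioc] with s hs
    rw [Real.norm_eq_abs, abs_of_nonneg (hgden0 s)]
    calc β s * (angL K β ℓ s)⁻¹ * Gam K β s ^ 2
        ≤ β s * 1 * Gam K β s ^ 2 := by
          apply mul_le_mul_of_nonneg_right
            (mul_le_mul_of_nonneg_left (hAinv1 s) (hβ0 s)) (sq_nonneg _)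
      _ ≤ Gam K β r ^ 2 * β s := by
          rw [mul_one, mul_comm]
          exact mul_le_mul_of_nonneg_right
            (pow_le_pow_left₀ (hΓ0 s) (hΓmono hs.2) 2) (hβ0 s)
  have hcore : ∀ s, (1 + Lc)⁻¹ * β s ≤ gden s := by
    intro s
    have hpos1 : (0:ℝ) < 1 + Lc := by linarith
    have hinv : ((1 + Lc) * Gam K β s ^ 2)⁻¹ ≤ (angL K β ℓ s)⁻¹ :=
      inv_anti₀ (hApos s) (hAbound s)
    calc (1 + Lc)⁻¹ * β s
        = β s * ((1 + Lc) * Gam K β s ^ 2)⁻¹ * Gam K β s ^ 2 := by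
          rw [mul_inv, show β s * ((1 + Lc)⁻¹ * (Gam K β s ^ 2)⁻¹) * Gam K β s ^ 2
            = (1 + Lc)⁻¹ * β s * ((Gam K β s ^ 2)⁻¹ * Gam K β s ^ 2) from by ring,
            inv_mul_cancel₀ (pow_ne_zero 2 (hΓne s)), mul_one]
      _ ≤ β s * (angL K β ℓ s)⁻¹ * Gam K β s ^ 2 :=
          mul_le_mul_of_nonneg_right
            (mul_le_mul_of_nonneg_left hinv (hβ0 s)) (sq_nonneg _)
  -- I1
  set I1 : ℝ → ℝ := fun t => ∫ s in Ioc 0 t, gden s ∂K.measure with hI1def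
  have hI1top : Tendsto I1 atTop atTop := by
    apply tendsto_atTop_mono (f := fun t => (1 + Lc)⁻¹ * ∫ s in Ioc 0 t, β s ∂K.measure)
    · intro t
      rw [← integral_const_mul]
      exact setIntegral_mono_on ((intβ t).const_mul _) (intgden t) measurableSet_Ioc
        fun s _ => hcore s
    · exact Tendsto.const_mul_atTop (by positivity) hFtop
  have hI1mono : Monotone I1 := polyak_mono_intIoc K.measure gden hgden0 intgden
  -- ε functions
  have hEps1 : ∀ r : ℝ, epsAlpha K β ℓ (fun _ => 1) r = 1 + I1 r := by
    intro r
    unfold epsAlpha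
    congr 1
    exact int_congr _ _ (fun s => by simp only [hgdendef]; ring) r
  have hEpsA : ∀ r : ℝ, epsAlpha K β ℓ α r
      = 1 + ∫ s in Ioc 0 r, α s * gden s ∂K.measure := by
    intro r
    unfold epsAlpha
    congr 1
    exact int_congr _ _ (fun s => by simp only [hgdendef]; ring) r
  have intαgden : ∀ r : ℝ, IntegrableOn (fun s => α s * gden s) (Ioc 0 r) K.measure := by
    intro r
    apply Integrable.mono' ((intαβ r).const_mul (Gam K β r ^ 2))
      (hαmeas.mul hgdenmeas).aestronglyMeasurable
    filter_upwards [ae_restrict_mem measurableSet_Ioc] with s hs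
    simp only [Real.norm_eq_abs, Pi.mul_apply]; rw [abs_of_nonneg (mul_nonneg (hα0 s) (hgden0 s))]
    calc α s * gden s ≤ α s * (β s * 1 * Gam K β s ^ 2) := by
          apply mul_le_mul_of_nonneg_left _ (hα0 s)
          simp only [hgdendef]
          apply mul_le_mul_of_nonneg_right
            (mul_le_mul_of_nonneg_left (hAinv1 s) (hβ0 s)) (sq_nonneg _)
      _ ≤ Gam K β r ^ 2 * (α s * β s) := by
          rw [mul_one]
          have := pow_le_pow_left₀ (hΓ0 s) (hΓmono hs.2) 2
          nlinarith [mul_nonneg (hα0 s) (hβ0 s)]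
  -- N and chain rule
  set bg : ℝ → ℝ := fun s => β s * Gam K β s with hbgdef
  have hbg0 : ∀ s, 0 ≤ bg s := fun s => mul_nonneg (hβ0 s) (hΓ0 s)
  have hbgmeas : Measurable bg := hβmeas.mul hΓmeas
  have intbg : ∀ r : ℝ, IntegrableOn bg (Ioc 0 r) K.measure := by
    intro r
    apply Integrable.mono' ((intβ r).const_mul (Gam K β r)) hbgmeas.aestronglyMeasurable
    filter_upwards [ae_restrict_mem measurableSet_Ioc] with s hs
    rw [Real.norm_eq_abs, abs_of_nonneg (hbg0 s), mul_comm (Gam K β r) (β s)]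
    exact mul_le_mul_of_nonneg_left (hΓmono hs.2) (hβ0 s)
  set N : ℝ → ℝ := fun t => ∫ s in Ioc 0 t, bg s ∂K.measure with hNdef
  have hNtop : Tendsto N atTop atTop := by
    apply tendsto_atTop_mono (f := fun t => ∫ s in Ioc 0 t, β s ∂K.measure)
    · intro t
      exact setIntegral_mono_on (intβ t) (intbg t) measurableSet_Ioc
        fun s _ => le_mul_of_one_le_right (hβ0 s) (hΓ1 s)
    · exact hFtop
  have hΓN : ∀ r : ℝ, Gam K β r = 1 + N r := by
    intro r
    have := polyak_exp K.measure β hβmeas hβ0 intβ hμfin r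
    exact this
  -- M
  set mfun : ℝ → ℝ := fun s => α s * β s * Gam K β s with hmfundef
  have hmfun0 : ∀ s, 0 ≤ mfun s := fun s =>
    mul_nonneg (mul_nonneg (hα0 s) (hβ0 s)) (hΓ0 s)
  have hmfunmeas : Measurable mfun := (hαmeas.mul hβmeas).mul hΓmeas
  have intmfun : ∀ r : ℝ, IntegrableOn mfun (Ioc 0 r) K.measure := by
    intro r
    apply Integrable.mono' ((intαβ r).const_mul (Gam K β r)) hmfunmeas.aestronglyMeasurable
    filter_upwards [ae_restrict_mem measurableSet_Ioc] with s hs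
    rw [Real.norm_eq_abs, abs_of_nonneg (hmfun0 s)]
    calc α s * β s * Gam K β s ≤ α s * β s * Gam K β r :=
          mul_le_mul_of_nonneg_left (hΓmono hs.2) (mul_nonneg (hα0 s) (hβ0 s))
      _ = Gam K β r * (α s * β s) := by ring
  set M : ℝ → ℝ := fun t => ∫ s in Ioc 0 t, mfun s ∂K.measure with hMdef
  have hM0 : ∀ s, 0 ≤ M s := fun s => polyak_nonneg_intIoc K.measure mfun hmfun0 s
  have hMmono : Monotone M := polyak_mono_intIoc K.measure mfun hmfun0 intmfun
  have hMmeas : Measurable M := hMmono.measurable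
  -- M / Γ → a
  have hNfrac : Tendsto (fun t => N t / (1 + N t)) atTop (𝓝 1) := by
    have h1 : Tendsto (fun t => 1 + N t) atTop atTop := tendsto_atTop_add_const_left _ 1 hNtop
    have h2 : Tendsto (fun t => 1 - (1 + N t)⁻¹) atTop (𝓝 (1 - 0)) :=
      tendsto_const_nhds.sub h1.inv_tendsto_atTop
    rw [sub_zero] at h2
    apply h2.congr'
    filter_upwards [hNtop.eventually_ge_atTop 1] with t hN1
    have : (1 : ℝ) + N t ≠ 0 := by linarith
    field_simp
    ring
  have hdivΓ : ∀ (W : ℝ → ℝ) (c : ℝ), Tendsto (fun t => W t / N t) atTop (𝓝 c) →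
      Tendsto (fun t => W t / Gam K β t) atTop (𝓝 c) := by
    intro W c hWN
    have h1 : Tendsto (fun t => W t / N t * (N t / (1 + N t))) atTop (𝓝 (c * 1)) :=
      hWN.mul hNfrac
    rw [mul_one] at h1
    apply h1.congr'
    filter_upwards [hNtop.eventually_ge_atTop 1] with t hN1
    have hN0 : N t ≠ 0 := by linarith
    have hN1' : (1:ℝ) + N t ≠ 0 := by linarith
    rw [hΓN t]
    field_simp
  have hMΓ : Tendsto (fun t => M t / Gam K β t) atTop (𝓝 a) := by
    apply hdivΓ M a
    have := polyak_toeplitz K.measure α bg hbg0 intbg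
      (fun r => by
        have heq : (fun s => α s * bg s) = mfun := by
          funext s; simp only [hbgdef, hmfundef]; ring
        rw [heq]; exact intmfun r) hNtop hα
    apply this.congr
    intro t
    congr 1
    exact int_congr _ _ (fun s => by simp only [hbgdef, hmfundef]; ring) t
  -- B
  set h : ℝ → ℝ := fun s => α s * β s * (angL K β ℓ s)⁻¹ * Gam K β s with hhdef
  have hh0 : ∀ s, 0 ≤ h s := fun s =>
    mul_nonneg (mul_nonneg (mul_nonneg (hα0 s) (hβ0 s)) (hAinv0 s)) (hΓ0 s)
  have hhmeas : Measurable h := ((hαmeas.mul hβmeas).mul hAmeas.inv).mul hΓmeas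
  have inth : ∀ r : ℝ, IntegrableOn h (Ioc 0 r) K.measure := by
    intro r
    apply Integrable.mono' ((intαβ r).const_mul (Gam K β r)) hhmeas.aestronglyMeasurable
    filter_upwards [ae_restrict_mem measurableSet_Ioc] with s hs
    rw [Real.norm_eq_abs, abs_of_nonneg (hh0 s)]
    calc α s * β s * (angL K β ℓ s)⁻¹ * Gam K β s
        ≤ α s * β s * 1 * Gam K β s := by
          apply mul_le_mul_of_nonneg_right
            (mul_le_mul_of_nonneg_left (hAinv1 s) (mul_nonneg (hα0 s) (hβ0 s))) (hΓ0 s)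
      _ ≤ Gam K β r * (α s * β s) := by
          rw [mul_one]
          calc α s * β s * Gam K β s ≤ α s * β s * Gam K β r :=
                mul_le_mul_of_nonneg_left (hΓmono hs.2) (mul_nonneg (hα0 s) (hβ0 s))
            _ = Gam K β r * (α s * β s) := by ring
  have hBint : ∀ r : ℝ, BAlpha K β ℓ α r = ∫ s in Ioc 0 r, h s ∂K.measure := fun r => rfl
  have hB0 : ∀ s, 0 ≤ BAlpha K β ℓ α s := fun s => by
    rw [hBint s]; exact polyak_nonneg_intIoc K.measure h hh0 s
  have hBmono : Monotone (BAlpha K β ℓ α) := by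
    intro u v huv
    rw [hBint u, hBint v]
    exact polyak_mono_intIoc K.measure h hh0 inth huv
  have hBmeas : Measurable (BAlpha K β ℓ α) := hBmono.measurable
  -- B / Γ → 0
  have hBΓ : Tendsto (fun t => BAlpha K β ℓ α t / Gam K β t) atTop (𝓝 0) := by
    apply hdivΓ _ 0
    have hwlim : Tendsto (fun s => α s * (angL K β ℓ s)⁻¹) atTop (𝓝 (a * 0)) :=
      hα.mul hLtop.inv_tendsto_atTop
    rw [mul_zero] at hwlim
    have := polyak_toeplitz K.measure (fun s => α s * (angL K β ℓ s)⁻¹) bg hbg0 intbg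
      (fun r => by
        have heq : (fun s => (α s * (angL K β ℓ s)⁻¹) * bg s) = h := by
          funext s; simp only [hbgdef, hhdef]; ring
        rw [heq]; exact inth r) hNtop hwlim
    apply this.congr
    intro t
    congr 1
    exact (int_congr _ _ (fun s => by simp only [hbgdef, hhdef]; ring) t).trans (hBint t).symm
  -- key pointwise identity : A * h = mfun
  have hAh : ∀ s, (angL K β ℓ s - 1) * h s = mfun s - h s := by
    intro s
    have hAm : angL K β ℓ s * h s = mfun s := by
      simp only [hhdef, hmfundef]
      field_simp
      rw [mul_assoc, mul_assoc, mul_div_cancel_left₀ _ (hAne s)]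
      ring
    rw [sub_mul, hAm, one_mul]
  -- more integrability
  have intBq : ∀ r : ℝ, IntegrableOn (fun s => BAlpha K β ℓ α s * q s) (Ioc 0 r) K.measure := by
    intro r
    apply Integrable.mono' ((intq r).const_mul (BAlpha K β ℓ α r))
      (hBmeas.mul hqmeas).aestronglyMeasurable
    filter_upwards [ae_restrict_mem measurableSet_Ioc] with s hs
    simp only [Real.norm_eq_abs, Pi.mul_apply]; rw [abs_of_nonneg (mul_nonneg (hB0 s) (hq0 s))]
    exact mul_le_mul_of_nonneg_right (hBmono hs.2) (hq0 s)
  have intB2q : ∀ r : ℝ,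
      IntegrableOn (fun s => BAlpha K β ℓ α s ^ 2 * q s) (Ioc 0 r) K.measure := by
    intro r
    apply Integrable.mono' ((intq r).const_mul (BAlpha K β ℓ α r ^ 2))
      ((hBmeas.pow_const 2).mul hqmeas).aestronglyMeasurable
    filter_upwards [ae_restrict_mem measurableSet_Ioc] with s hs
    simp only [Real.norm_eq_abs, Pi.mul_apply]; rw [abs_of_nonneg (mul_nonneg (sq_nonneg _) (hq0 s))]
    exact mul_le_mul_of_nonneg_right (pow_le_pow_left₀ (hB0 s) (hBmono hs.2) 2) (hq0 s)
  have intBh : ∀ r : ℝ,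
      IntegrableOn (fun s => BAlpha K β ℓ α s * h s) (Ioc 0 r) K.measure := by
    intro r
    apply Integrable.mono' ((inth r).const_mul (BAlpha K β ℓ α r))
      (hBmeas.mul hhmeas).aestronglyMeasurable
    filter_upwards [ae_restrict_mem measurableSet_Ioc] with s hs
    simp only [Real.norm_eq_abs, Pi.mul_apply]; rw [abs_of_nonneg (mul_nonneg (hB0 s) (hh0 s))]
    exact mul_le_mul_of_nonneg_right (hBmono hs.2) (hh0 s)
  have intBm : ∀ r : ℝ,
      IntegrableOn (fun s => BAlpha K β ℓ α s * mfun s) (Ioc 0 r) K.measure := by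
    intro r
    apply Integrable.mono' ((intmfun r).const_mul (BAlpha K β ℓ α r))
      (hBmeas.mul hmfunmeas).aestronglyMeasurable
    filter_upwards [ae_restrict_mem measurableSet_Ioc] with s hs
    simp only [Real.norm_eq_abs, Pi.mul_apply]; rw [abs_of_nonneg (mul_nonneg (hB0 s) (hmfun0 s))]
    exact mul_le_mul_of_nonneg_right (hBmono hs.2) (hmfun0 s)
  have intMh : ∀ r : ℝ,
      IntegrableOn (fun s => M s * h s) (Ioc 0 r) K.measure := by
    intro r
    apply Integrable.mono' ((inth r).const_mul (M r))
      (hMmeas.mul hhmeas).aestronglyMeasurable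
    filter_upwards [ae_restrict_mem measurableSet_Ioc] with s hs
    simp only [Real.norm_eq_abs, Pi.mul_apply]; rw [abs_of_nonneg (mul_nonneg (hM0 s) (hh0 s))]
    exact mul_le_mul_of_nonneg_right (hMmono hs.2) (hh0 s)
  -- IBP consequences
  have hS2 : ∀ r : ℝ, BAlpha K β ℓ α r ^ 2
      = 2 * ∫ s in Ioc 0 r, BAlpha K β ℓ α s * h s ∂K.measure := by
    intro r
    have := polyak_ibp K.measure h h hhmeas hhmeas hh0 hh0 r (hμfin r) inth inth
    simp only [← hBint] at this
    rw [sq, this]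
    ring
  have hB2int : ∀ r : ℝ,
      (∫ s in Ioc 0 r, 2 * (BAlpha K β ℓ α s * h s) ∂K.measure) = BAlpha K β ℓ α r ^ 2 := by
    intro r
    rw [integral_const_mul]
    exact (hS2 r).symm
  have hMint : ∀ r : ℝ, (∫ s in Ioc 0 r, mfun s ∂K.measure) = M r := fun r => rfl
  -- the key identity (★)
  have hstar : ∀ t : ℝ, BtildeAlpha K β ℓ α t
      = 2 * (∫ s in Ioc 0 t, M s * h s ∂K.measure) - BAlpha K β ℓ α t ^ 2 := by
    intro t
    have hS1 := polyak_ibp K.measure h q hhmeas hqmeas hh0 hq0 t (hμfin t) inth intq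
    simp only [← hBint, hAq] at hS1
    have hS3 := polyak_ibp K.measure (fun s => 2 * (BAlpha K β ℓ α s * h s)) q
      ((hBmeas.mul hhmeas).const_mul 2) hqmeas
      (fun s => mul_nonneg (by norm_num) (mul_nonneg (hB0 s) (hh0 s))) hq0 t (hμfin t)
      (fun r => (intBh r).const_mul 2) intq
    simp only [hB2int, hAq] at hS3
    have hS4 := polyak_ibp K.measure h mfun hhmeas hmfunmeas hh0 hmfun0 t (hμfin t)
      inth intmfun
    simp only [← hBint, hMint] at hS4
    have hHm : (∫ s in Ioc 0 t, (angL K β ℓ s - 1) * h s ∂K.measure)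
        = M t - BAlpha K β ℓ α t := by
      rw [int_congr _ _ hAh t, integral_sub (intmfun t) (inth t), hMint t, ← hBint t]
    have hHABh : (∫ s in Ioc 0 t, (angL K β ℓ s - 1) * (2 * (BAlpha K β ℓ α s * h s)) ∂K.measure)
        = 2 * (∫ s in Ioc 0 t, BAlpha K β ℓ α s * mfun s ∂K.measure)
          - 2 * (∫ s in Ioc 0 t, BAlpha K β ℓ α s * h s ∂K.measure) := by
      have hpt : ∀ s, (angL K β ℓ s - 1) * (2 * (BAlpha K β ℓ α s * h s))
          = 2 * (BAlpha K β ℓ α s * mfun s) - 2 * (BAlpha K β ℓ α s * h s) := by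
        intro s
        linear_combination (2 * BAlpha K β ℓ α s) * hAh s
      rw [int_congr _ _ hpt t,
        integral_sub ((intBm t).const_mul 2) ((intBh t).const_mul 2),
        integral_const_mul, integral_const_mul]
    have hBtilde : BtildeAlpha K β ℓ α t
        = BAlpha K β ℓ α t ^ 2 * (angL K β ℓ t - 1)
          - 2 * BAlpha K β ℓ α t * (∫ s in Ioc 0 t, BAlpha K β ℓ α s * q s ∂K.measure)
          + ∫ s in Ioc 0 t, BAlpha K β ℓ α s ^ 2 * q s ∂K.measure := by
      have h1 : BtildeAlpha K β ℓ α t = ∫ s in Ioc 0 t,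
          (BAlpha K β ℓ α t ^ 2 * q s - 2 * BAlpha K β ℓ α t * (BAlpha K β ℓ α s * q s)
            + BAlpha K β ℓ α s ^ 2 * q s) ∂K.measure :=
        int_congr _ _ (fun s => by simp only [hqdef]; ring) t
      have hIA : IntegrableOn (fun s => BAlpha K β ℓ α t ^ 2 * q s) (Ioc 0 t) K.measure :=
        (intq t).const_mul _
      have hIB : IntegrableOn
          (fun s => 2 * BAlpha K β ℓ α t * (BAlpha K β ℓ α s * q s)) (Ioc 0 t) K.measure :=
        (intBq t).const_mul _
      have hIAB : IntegrableOn
          (fun s => BAlpha K β ℓ α t ^ 2 * q s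
            - 2 * BAlpha K β ℓ α t * (BAlpha K β ℓ α s * q s)) (Ioc 0 t) K.measure := by
        have := hIA.sub hIB
        exact this
      rw [h1, integral_add hIAB (intB2q t), integral_sub hIA hIB,
        integral_const_mul, integral_const_mul, hAq t]
    linear_combination hBtilde + (2 * BAlpha K β ℓ α t) * hS1 - hS3 + 2 * hS4
      + (2 * BAlpha K β ℓ α t) * hHm - hHABh - hS2 t
  -- the three limit components
  have hP9 : Tendsto (fun t => (∫ s in Ioc 0 t, M s * h s ∂K.measure) / I1 t)
      atTop (𝓝 (a * a)) := by
    have hMα : Tendsto (fun s => M s / Gam K β s * α s) atTop (𝓝 (a * a)) := hMΓ.mul hα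
    have hpt : ∀ s, (M s / Gam K β s * α s) * gden s = M s * h s := by
      intro s
      simp only [hgdendef, hhdef]
      rw [div_eq_mul_inv,
        show M s * (Gam K β s)⁻¹ * α s * (β s * (angL K β ℓ s)⁻¹ * Gam K β s ^ 2)
          = M s * (α s * β s * (angL K β ℓ s)⁻¹ * Gam K β s) * ((Gam K β s)⁻¹ * Gam K β s)
          from by ring,
        inv_mul_cancel₀ (hΓne s), mul_one]
    have := polyak_toeplitz K.measure (fun s => M s / Gam K β s * α s) gden hgden0 intgden
      (fun r => by
        have heq : (fun s => (M s / Gam K β s * α s) * gden s) = fun s => M s * h s :=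
          funext hpt
        rw [heq]; exact intMh r) hI1top hMα
    apply this.congr
    intro t
    congr 1
    exact int_congr _ _ hpt t
  have hP10 : Tendsto (fun t => BAlpha K β ℓ α t ^ 2 / I1 t) atTop (𝓝 0) := by
    have hBα : Tendsto (fun s => 2 * (BAlpha K β ℓ α s / Gam K β s) * α s)
        atTop (𝓝 (2 * 0 * a)) := (hBΓ.const_mul 2).mul hα
    rw [show (2:ℝ) * 0 * a = 0 from by ring] at hBα
    have hpt : ∀ s, (2 * (BAlpha K β ℓ α s / Gam K β s) * α s) * gden s
        = 2 * (BAlpha K β ℓ α s * h s) := by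
      intro s
      simp only [hgdendef, hhdef]
      rw [div_eq_mul_inv,
        show 2 * (BAlpha K β ℓ α s * (Gam K β s)⁻¹) * α s
              * (β s * (angL K β ℓ s)⁻¹ * Gam K β s ^ 2)
          = 2 * (BAlpha K β ℓ α s * (α s * β s * (angL K β ℓ s)⁻¹ * Gam K β s))
              * ((Gam K β s)⁻¹ * Gam K β s) from by ring,
        inv_mul_cancel₀ (hΓne s), mul_one]
    have := polyak_toeplitz K.measure (fun s => 2 * (BAlpha K β ℓ α s / Gam K β s) * α s)
      gden hgden0 intgden
      (fun r => by
        have heq : (fun s => (2 * (BAlpha K β ℓ α s / Gam K β s) * α s) * gden s)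
            = fun s => 2 * (BAlpha K β ℓ α s * h s) := funext hpt
        rw [heq]; exact (intBh r).const_mul 2) hI1top hBα
    apply this.congr
    intro t
    congr 1
    exact (int_congr _ _ hpt t).trans (hB2int t)
  have hP7 := polyak_toeplitz K.measure α gden hgden0 intgden intαgden hI1top hα
  -- assemble
  have hX : Tendsto (fun t => BtildeAlpha K β ℓ α t / I1 t) atTop (𝓝 (2 * (a * a))) := by
    have h2 : Tendsto (fun t =>
        2 * ((∫ s in Ioc 0 t, M s * h s ∂K.measure) / I1 t) - BAlpha K β ℓ α t ^ 2 / I1 t)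
        atTop (𝓝 (2 * (a * a) - 0)) := (hP9.const_mul 2).sub hP10
    rw [sub_zero] at h2
    apply h2.congr
    intro t
    rw [hstar t, sub_div, mul_div_assoc]
  have hYinv : Tendsto (fun t => (I1 t)⁻¹) atTop (𝓝 0) := hI1top.inv_tendsto_atTop
  have hY : Tendsto (fun t => epsAlpha K β ℓ (fun _ => 1) t / I1 t) atTop (𝓝 1) := by
    have h2 : Tendsto (fun t => (I1 t)⁻¹ + 1) atTop (𝓝 (0 + 1)) :=
      hYinv.add tendsto_const_nhds
    rw [zero_add] at h2
    apply h2.congr'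
    filter_upwards [hI1top.eventually_ge_atTop 1] with t h1
    have hne : I1 t ≠ 0 := by linarith
    rw [hEps1 t, add_div, div_self hne, one_div]
  have hZ : Tendsto (fun t => epsAlpha K β ℓ α t / I1 t) atTop (𝓝 a) := by
    have h2 : Tendsto (fun t =>
        ((∫ s in Ioc 0 t, α s * gden s ∂K.measure) / I1 t) + (I1 t)⁻¹)
        atTop (𝓝 (a + 0)) := hP7.add hYinv
    rw [add_zero] at h2
    apply h2.congr
    intro t
    rw [hEpsA t, add_div, one_div]
    ring
  have hfinal : Tendsto (fun t =>
      (BtildeAlpha K β ℓ α t / I1 t) * (epsAlpha K β ℓ (fun _ => 1) t / I1 t)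
        / (epsAlpha K β ℓ α t / I1 t) ^ 2) atTop (𝓝 (2 * (a * a) * 1 / a ^ 2)) :=
    Tendsto.div (hX.mul hY) (hZ.pow 2) (pow_ne_zero 2 ha.ne')
  rw [show (2 * (a * a) * 1 / a ^ 2 : ℝ) = 2 from by field_simp] at hfinal
  apply hfinal.congr'
  filter_upwards [hI1top.eventually_ge_atTop 1] with t h1
  have hne : I1 t ≠ 0 := by linarith
  have hepos : (0:ℝ) < epsAlpha K β ℓ α t := by
    rw [hEpsA t]
    have := polyak_nonneg_intIoc K.measure (fun s => α s * gden s)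
      (fun s => mul_nonneg (hα0 s) (hgden0 s)) t
    linarith
  have hene : epsAlpha K β ℓ α t ≠ 0 := hepos.ne'
  field_simp
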